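/- Let E be a finite set with maps i, t : E → Fin 5 (a directed multigraph on five vertices labelled 0,1,2,3,4). Assume: (1) for each vertex v, the number of edges e with t(e) = v equals v, and the number of edges e with i(e) = v equals 4 − v; (2) there are no self-loops, i.e. i(e) ≠ t(e) for every edge e; (3) every edge e with t(e) = 1 satisfies i(e) = 0; (4) every edge e with i(e) = 3 satisfies t(e) = 4. Then for every edge e, i(e) < t(e). In particular, for any strictly decreasing function Γ : Fin 5 → ℤ one has Γ(i(e)) > Γ(t(e)) for every edge e. (This is the combinatorial core of the proof of Theorem 3.8: the multigraph describing a Hamiltonian S¹-action on a closed 8-manifold with exactly 5 fixed points, where the fixed point of Morse index 2v is the vertex v, satisfies these hypotheses, and the conclusion yields the positivity property (P₀⁺).) -/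

import Mathlib

open Finset

/-- the combinatorial core of the proof of Theorem 3.8.  A directed
multigraph on the five vertices `Fin 5` (vertex `v` corresponding to a fixed
point of Morse index `2v`) with edge set `E` and initial/terminal maps
`i, t : E → Fin 5` such that the in-degree of `v` is `v` and the out-degree of
`v` is `4 - v`, with no self-loops, every edge into vertex `1` starting at `0`,
and every edge out of vertex `3` ending at `4`, satisfies `i e < t e` for every
edge; in particular any strictly decreasing `Γ : Fin 5 → ℤ` satisfies
`Γ (i e) > Γ (t e)` for every edge. -/
theorem multigraph_edges_increase
    (E : Type*) [Fintype E] (i t : E → Fin 5)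
    (hin : ∀ v : Fin 5, ((univ : Finset E).filter fun e => t e = v).card = (v : ℕ))
    (hout : ∀ v : Fin 5, ((univ : Finset E).filter fun e => i e = v).card = 4 - (v : ℕ))
    (hloop : ∀ e : E, i e ≠ t e)
    (h1 : ∀ e : E, t e = 1 → i e = 0)
    (h3 : ∀ e : E, i e = 3 → t e = 4) :
    (∀ e : E, i e < t e) ∧
      ∀ Γ : Fin 5 → ℤ, StrictAnti Γ → ∀ e : E, Γ (i e) > Γ (t e) := by
  have key : ∀ e : E, i e < t e := by
    intro e
    have ht0 : t e ≠ 0 := by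
      intro h
      have hc : ((univ : Finset E).filter fun e => t e = 0) = ∅ := by
        have := hin 0; norm_num at this; simpa using this
      have hmem : e ∈ (univ : Finset E).filter fun e => t e = 0 :=
        Finset.mem_filter.mpr ⟨Finset.mem_univ e, h⟩
      simp [hc] at hmem
    have hi4 : i e ≠ 4 := by
      intro h
      have hc : ((univ : Finset E).filter fun e => i e = 4) = ∅ := by
        have h4 : ((4 : Fin 5) : ℕ) = 4 := rfl
        have := hout 4; rw [h4] at this; norm_num at this; simpa using this
      have hmem : e ∈ (univ : Finset E).filter fun e => i e = 4 :=
        Finset.mem_filter.mpr ⟨Finset.mem_univ e, h⟩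
      simp [hc] at hmem
    have h1n : (t e : ℕ) = 1 → (i e : ℕ) = 0 := by
      intro h
      have ht : t e = 1 := by rw [Fin.ext_iff]; exact h
      rw [h1 e ht]; rfl
    have h3n : (i e : ℕ) = 3 → (t e : ℕ) = 4 := by
      intro h
      have hi : i e = 3 := by rw [Fin.ext_iff]; exact h
      rw [h3 e hi]; rfl
    have hln : (i e : ℕ) ≠ (t e : ℕ) := fun h => hloop e (Fin.ext h)
    have ht0n : (t e : ℕ) ≠ 0 := fun h => ht0 (Fin.ext h)
    have hi4n : (i e : ℕ) ≠ 4 := fun h => hi4 (Fin.ext h)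
    have hiv : (i e : ℕ) < 5 := (i e).isLt
    have htv : (t e : ℕ) < 5 := (t e).isLt
    rw [Fin.lt_def]
    omega
  exact ⟨key, fun Γ hΓ e => hΓ (key e)⟩
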